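/- Let n ≥ 2 and let x ⋖ y ⋖ z in P_n^*, where the step x ⋖ y uncrosses a crossing of x formed by the pairs P_1, P_2, and the step y ⋖ z uncrosses a crossing of y formed by pairs Q_1, Q_2 that are also pairs of x (so the eight positions in P_1 ∪ P_2 ∪ Q_1 ∪ Q_2 are pairwise distinct). Then the involution y' obtained from x by applying to Q_1, Q_2 the same replacement (nesting or disjoint) that is used in the step y ⋖ z satisfies x ⋖ y' ⋖ z in P_n^*; in particular y' ≠ y. -/

import Mathlib

open Equiv Finset

/-- A candidate wire diagram: a permutation of the `2 n` endpoint positions. -/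
abbrev WDperm (n : ℕ) := Equiv.Perm (Fin (2 * n))

/-- `σ` is a wire diagram on `n` wires: a fixed-point-free involution of the `2 n` positions. -/
def IsWD {n : ℕ} (σ : WDperm n) : Prop := (∀ x, σ (σ x) = x) ∧ ∀ x, σ x ≠ x

instance IsWD.decPred {n : ℕ} : DecidablePred (@IsWD n) := fun σ => by
  unfold IsWD; infer_instance

/-- Positions `a < c` are first endpoints of a pair of crossing wires `{a, σ a}`, `{c, σ c}`,
i.e. `a < c < σ a < σ c`. -/
def IsCrossing {n : ℕ} (σ : WDperm n) (a c : Fin (2 * n)) : Prop :=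
  a < c ∧ c < σ a ∧ σ a < σ c

instance IsCrossing.dec {n : ℕ} (σ : WDperm n) (a c : Fin (2 * n)) :
    Decidable (IsCrossing σ a c) := by unfold IsCrossing; infer_instance

/-- The number `c(σ)` of crossings of `σ`. -/
def ncross {n : ℕ} (σ : WDperm n) : ℕ :=
  (Finset.univ.filter (fun p : Fin (2 * n) × Fin (2 * n) => IsCrossing σ p.1 p.2)).card

/-- The nesting uncrossing of the crossing `{a, σ a}, {c, σ c}` (with `a < c < σ a < σ c`):
replace the pairs `{a,b},{c,d}` by `{a,d},{b,c}` where `b = σ a`, `d = σ c`. -/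
def nestU {n : ℕ} (σ : WDperm n) (a c : Fin (2 * n)) : WDperm n :=
  Equiv.swap (σ a) (σ c) * σ * Equiv.swap (σ a) (σ c)

/-- The disjoint uncrossing: replace the pairs `{a,b},{c,d}` by `{a,c},{b,d}`. -/
def disjU {n : ℕ} (σ : WDperm n) (a c : Fin (2 * n)) : WDperm n :=
  Equiv.swap (σ a) c * σ * Equiv.swap (σ a) c

/-- `τ` is obtained from `σ` by a nesting uncrossing of some crossing of `σ`. -/
def IsNestStep {n : ℕ} (σ τ : WDperm n) : Prop := ∃ a c, IsCrossing σ a c ∧ τ = nestU σ a c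

/-- `τ` is obtained from `σ` by a disjoint uncrossing of some crossing of `σ`. -/
def IsDisjStep {n : ℕ} (σ τ : WDperm n) : Prop := ∃ a c, IsCrossing σ a c ∧ τ = disjU σ a c

/-- `τ` is obtained from `σ` by an uncrossing step that decreases the crossing number by one. -/
def UncCov {n : ℕ} (σ τ : WDperm n) : Prop :=
  (IsNestStep σ τ ∨ IsDisjStep σ τ) ∧ ncross τ + 1 = ncross σ

/-- The dual uncrossing poset `P_n^*`: wire diagrams together with a top element `none = 1̂`
(the adjoined element `0̂` of `P_n`). -/
abbrev PStar (n : ℕ) := Option {σ : WDperm n // IsWD σ}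

/-- The covering relation of `P_n^*`. -/
def Cov {n : ℕ} : PStar n → PStar n → Prop
  | some σ, some τ => UncCov σ.1 τ.1
  | some σ, none => ncross σ.1 = 0
  | none, _ => False

/-- The partial order of `P_n^*`: reflexive-transitive closure of the covering relation. -/
def ple {n : ℕ} : PStar n → PStar n → Prop := Relation.ReflTransGen Cov

/-- The (0-indexed) name `w(σ)(x)` of the wire through position `x`: the number of wires whose
first endpoint is strictly smaller than the first endpoint of the wire through `x`. -/
def word {n : ℕ} (σ : WDperm n) (x : Fin (2 * n)) : ℕ :=
  (Finset.univ.filter (fun a : Fin (2 * n) => a < σ a ∧ a < min x (σ x))).card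

/-- The start set `S(σ)`: the set of first endpoints of wires of `σ`. -/
def startSet {n : ℕ} (σ : WDperm n) : Finset (Fin (2 * n)) :=
  Finset.univ.filter (fun a => a < σ a)

/-- The noncrossing pair set `N(σ)` (on 0-indexed wire names): `(i, j)` with `i < j` for each
nested pair of wires `i < j`, and `(j, i)` for each disjoint pair of wires `i < j`. -/
def NPairs {n : ℕ} (σ : WDperm n) : Set (ℕ × ℕ) :=
  {p | ∃ a c : Fin (2 * n), a < σ a ∧ c < σ c ∧ a < c ∧
        ((σ c < σ a ∧ p = (word σ a, word σ c)) ∨ (σ a < c ∧ p = (word σ c, word σ a)))}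

/-- Lexicographic comparison of finsets via their increasing enumerations. -/
def finsetLexLE {m : ℕ} (A B : Finset (Fin m)) : Prop :=
  A = B ∨ List.Lex (· < ·) (A.sort (· ≤ ·)) (B.sort (· ≤ ·))

/-- Labels of the edge labeling: ordered pairs of (0-indexed) wire names, and a label `L`. -/
inductive Lbl where
  | pair : ℕ → ℕ → Lbl
  | L : Lbl
deriving DecidableEq

/-- The total order `<λ` on labels. -/
def lblLT : Lbl → Lbl → Prop
  | .pair i j, .pair i' j' =>
      if i < j then (if i' < j' then i < i' ∨ (i = i' ∧ j < j') else True)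
      else (if i' < j' then False else (j' < j ∨ (j = j' ∧ i' < i)))
  | .pair i j, .L => i < j
  | .L, .pair r s => s < r
  | .L, .L => False

/-- `≤λ` on labels. -/
def lblLE (p q : Lbl) : Prop := p = q ∨ lblLT p q

/-- The sorted list of positions where `σ` and `τ` differ. -/
def diffList {n : ℕ} (σ τ : WDperm n) : List (Fin (2 * n)) :=
  (Finset.univ.filter (fun x => σ x ≠ τ x)).sort (· ≤ ·)

/-- The edge labeling `λ` of `P_n^*`: an uncrossing of the crossing formed by wires `k < m`
of the lower diagram gets label `(k, m)` if it is the nesting uncrossing and `(m, k)` if it is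
the disjoint uncrossing; covers of the top element `1̂ = none` get the label `L`. -/
def lbl {n : ℕ} : PStar n → PStar n → Lbl
  | some σ, some τ =>
      match (diffList σ.1 τ.1)[0]?, (diffList σ.1 τ.1)[1]? with
      | some a, some c =>
          if τ.1 a = σ.1 c then Lbl.pair (word σ.1 a) (word σ.1 c)
          else Lbl.pair (word σ.1 c) (word σ.1 a)
      | _, _ => Lbl.L
  | _, _ => Lbl.L

/-- `c` is a saturated chain from `u` to `v` in `P_n^*`. -/
def SatChain {n : ℕ} (c : List (PStar n)) (u v : PStar n) : Prop :=
  c.Chain' Cov ∧ c.head? = some u ∧ c.getLast? = some v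

/-- The label sequence of a saturated chain. -/
def chainLabels {n : ℕ} (c : List (PStar n)) : List Lbl := c.zipWith lbl c.tail

/-- Lexicographic order on pairs of labels. -/
def pairLexLT (p q : Lbl × Lbl) : Prop := lblLT p.1 q.1 ∨ (p.1 = q.1 ∧ lblLT p.2 q.2)

/-- `x ⋖ y ⋖ z` is a topological ascent: its label pair is lexicographically strictly smaller
than the label pair of every other saturated chain from `x` to `z`. -/
def TopAscent {n : ℕ} (x y z : PStar n) : Prop :=
  Cov x y ∧ Cov y z ∧ ∀ y' : PStar n, Cov x y' → Cov y' z → y' ≠ y →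
    pairLexLT (lbl x y, lbl y z) (lbl x y', lbl y' z)

/-- `x ⋖ y ⋖ z` is a topological descent: a length-two chain that is not a topological ascent. -/
def TopDescent {n : ℕ} (x y z : PStar n) : Prop := Cov x y ∧ Cov y z ∧ ¬ TopAscent x y z

/-- Every length-two subchain of `c` is a topological ascent. -/
def AllTopAscents {n : ℕ} (c : List (PStar n)) : Prop :=
  ∀ x y z : PStar n, [x, y, z] <:+: c → TopAscent x y z

/-- The number of inversions of a permutation. -/
def numInv {n : ℕ} (π : Equiv.Perm (Fin n)) : ℕ :=
  (Finset.univ.filter (fun p : Fin n × Fin n => p.1 < p.2 ∧ π p.2 < π p.1)).card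

/-- One step of the Bruhat order: left multiplication by a transposition raising `inv` by one. -/
def BruhatStep {n : ℕ} (u v : Equiv.Perm (Fin n)) : Prop :=
  (∃ a b : Fin n, a ≠ b ∧ v = Equiv.swap a b * u) ∧ numInv v = numInv u + 1

/-- The Bruhat order on `S_n`. -/
def BruhatLE {n : ℕ} : Equiv.Perm (Fin n) → Equiv.Perm (Fin n) → Prop :=
  Relation.ReflTransGen BruhatStep

/-- The set of second endpoints of wires of `σ`. -/
def secondEnds {n : ℕ} (σ : WDperm n) : Finset (Fin (2 * n)) :=
  Finset.univ.filter (fun b => σ b < b)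

/-- The wire name at the `t`-th (0-indexed) second endpoint. -/
def piVal {n : ℕ} (σ : WDperm n) (t : ℕ) : ℕ :=
  (((secondEnds σ).sort (· ≤ ·))[t]?).elim 0 (word σ)

open Classical in
/-- The permutation `π(σ) ∈ S_n` reading the wire names at the second endpoints of `σ` in
increasing order of position. -/
noncomputable def piPerm {n : ℕ} (σ : WDperm n) : Equiv.Perm (Fin n) :=
  if h : Function.Bijective (fun t : Fin n =>
      if ht : piVal σ (t : ℕ) < n then (⟨piVal σ (t : ℕ), ht⟩ : Fin n) else t)
  then Equiv.ofBijective _ h else 1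

/-- Apply to the crossing at `(a, c)` the nesting (`nest = true`) or disjoint (`nest = false`)
uncrossing. -/
def uncrossAt {n : ℕ} (σ : WDperm n) (a c : Fin (2 * n)) (nest : Bool) : WDperm n :=
  if nest then nestU σ a c else disjU σ a c

namespace CDUaux

variable {n : ℕ}

def sp (σ : WDperm n) (a c x : Fin (2 * n)) : Prop :=
  x = a ∨ x = c ∨ x = σ a ∨ x = σ c

instance sp.dec (σ : WDperm n) (a c x : Fin (2 * n)) : Decidable (sp σ a c x) := by
  unfold sp; infer_instance

def u1 (σ : WDperm n) (a c w : Fin (2 * n)) : Fin (2 * n) :=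
  if (a < w ∧ w < σ a ∧ σ a < σ w) ∨ (w < a ∧ a < σ w ∧ σ w < σ a) then a else c

def u2 (σ : WDperm n) (a c w : Fin (2 * n)) : Fin (2 * n)  :=
  if (c < w ∧ w < σ c ∧ σ c < σ w) ∨ (w < c ∧ c < σ w ∧ σ w < σ c) then c else a

def fmap (σ : WDperm n) (a c : Fin (2 * n)) (pq : Fin (2 * n) × Fin (2 * n)) :
    Fin (2 * n) × Fin (2 * n) :=
  if sp σ a c pq.1 then
    (if pq.1 = a then (min (u1 σ a c pq.2) pq.2, max (u1 σ a c pq.2) pq.2)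
     else (min (u2 σ a c pq.2) pq.2, max (u2 σ a c pq.2) pq.2))
  else if sp σ a c pq.2 then
    (if pq.2 = a then (min (u1 σ a c pq.1) pq.1, max (u1 σ a c pq.1) pq.1)
     else (min (u2 σ a c pq.1) pq.1, max (u2 σ a c pq.1) pq.1))
  else pq

lemma u1_mem (σ : WDperm n) (a c w : Fin (2 * n)) : u1 σ a c w = a ∨ u1 σ a c w = c := by
  unfold u1; split <;> simp

lemma u2_mem (σ : WDperm n) (a c w : Fin (2 * n)) : u2 σ a c w = a ∨ u2 σ a c w = c := by
  unfold u2; split <;> simp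

lemma conj_apply (s σ : WDperm n) (x : Fin (2 * n)) : (s * σ * s) x = s (σ (s x)) := rfl

lemma pair_eq_pair {u w u' w' : Fin (2 * n)}
    (h : (min u w, max u w) = (min u' w', max u' w')) :
    (u = u' ∧ w = w') ∨ (u = w' ∧ w = u') := by
  injection h with h1 h2
  rw [_root_.min_def, _root_.min_def] at h1
  rw [_root_.max_def, _root_.max_def] at h2
  split_ifs at h1 h2 <;> omega

lemma fmapC (σ : WDperm n) (a c : Fin (2 * n)) {p q : Fin (2 * n)}
    (hp : ¬ sp σ a c p) (hq : ¬ sp σ a c q) : fmap σ a c (p, q) = (p, q) := by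
  unfold fmap; dsimp only; rw [if_neg hp, if_neg hq]

lemma fmapA (σ : WDperm n) (a c : Fin (2 * n)) {p q w : Fin (2 * n)} (hw : ¬ sp σ a c w)
    (hpq : p = a ∧ q = w ∨ p = w ∧ q = a) :
    fmap σ a c (p, q) = (min (u1 σ a c w) w, max (u1 σ a c w) w) := by
  have spa : sp σ a c a := Or.inl rfl
  rcases hpq with ⟨h1, h2⟩ | ⟨h1, h2⟩ <;> rw [h1, h2] <;> unfold fmap <;> dsimp only
  · rw [if_pos spa, if_pos rfl]
  · rw [if_neg hw, if_pos spa, if_pos rfl]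

lemma fmapB (σ : WDperm n) (a c c2 : Fin (2 * n)) (hsp2 : sp σ a c c2) (hc2a : c2 ≠ a)
    {p q w : Fin (2 * n)} (hw : ¬ sp σ a c w)
    (hpq : p = c2 ∧ q = w ∨ p = w ∧ q = c2) :
    fmap σ a c (p, q) = (min (u2 σ a c w) w, max (u2 σ a c w) w) := by
  rcases hpq with ⟨h1, h2⟩ | ⟨h1, h2⟩ <;> rw [h1, h2] <;> unfold fmap <;> dsimp only
  · rw [if_pos hsp2, if_neg hc2a]
  · rw [if_neg hw, if_pos hsp2, if_neg hc2a]

def MasterOut (σ : WDperm n) (a c c2 p q : Fin (2 * n)) : Prop :=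
  (¬ sp σ a c p ∧ ¬ sp σ a c q ∧ IsCrossing σ p q)
  ∨ (∃ w, ¬ sp σ a c w ∧ (p = a ∧ q = w ∨ p = w ∧ q = a) ∧
      IsCrossing σ (min (u1 σ a c w) w) (max (u1 σ a c w) w))
  ∨ (∃ w, ¬ sp σ a c w ∧ (p = c2 ∧ q = w ∨ p = w ∧ q = c2) ∧
      IsCrossing σ (min (u2 σ a c w) w) (max (u2 σ a c w) w))

lemma nest_apply (σ : WDperm n) (hinv : ∀ x, σ (σ x) = x) (a c : Fin (2 * n))
    (hc : IsCrossing σ a c) :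
    nestU σ a c a = σ c ∧ nestU σ a c c = σ a ∧ nestU σ a c (σ a) = c ∧
      nestU σ a c (σ c) = a ∧ ∀ w, ¬ sp σ a c w → nestU σ a c w = σ w := by
  obtain ⟨h1, h2, h3⟩ := hc
  have e1 : σ (σ a) = a := hinv a
  have e2 : σ (σ c) = c := hinv c
  refine ⟨?_, ?_, ?_, ?_, ?_⟩
  · unfold nestU
    rw [conj_apply, Equiv.swap_apply_of_ne_of_ne (show a ≠ σ a by omega) (show a ≠ σ c by omega),
      Equiv.swap_apply_left]
  · unfold nestU
    rw [conj_apply, Equiv.swap_apply_of_ne_of_ne (show c ≠ σ a by omega) (show c ≠ σ c by omega),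
      Equiv.swap_apply_right]
  · unfold nestU
    rw [conj_apply, Equiv.swap_apply_left, e2,
      Equiv.swap_apply_of_ne_of_ne (show c ≠ σ a by omega) (show c ≠ σ c by omega)]
  · unfold nestU
    rw [conj_apply, Equiv.swap_apply_right, e1,
      Equiv.swap_apply_of_ne_of_ne (show a ≠ σ a by omega) (show a ≠ σ c by omega)]
  · intro w hw
    unfold sp at hw; push_neg at hw
    obtain ⟨w1, w2, w3, w4⟩ := hw
    have s3 : σ w ≠ σ a := fun h => w1 (σ.injective h)
    have s4 : σ w ≠ σ c := fun h => w2 (σ.injective h)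
    unfold nestU
    rw [conj_apply, Equiv.swap_apply_of_ne_of_ne w3 w4, Equiv.swap_apply_of_ne_of_ne s3 s4]

lemma disj_apply (σ : WDperm n) (hinv : ∀ x, σ (σ x) = x) (a c : Fin (2 * n))
    (hc : IsCrossing σ a c) :
    disjU σ a c a = c ∧ disjU σ a c c = a ∧ disjU σ a c (σ a) = σ c ∧
      disjU σ a c (σ c) = σ a ∧ ∀ w, ¬ sp σ a c w → disjU σ a c w = σ w := by
  obtain ⟨h1, h2, h3⟩ := hc
  have e1 : σ (σ a) = a := hinv a
  have e2 : σ (σ c) = c := hinv c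
  refine ⟨?_, ?_, ?_, ?_, ?_⟩
  · unfold disjU
    rw [conj_apply, Equiv.swap_apply_of_ne_of_ne (show a ≠ σ a by omega) (show a ≠ c by omega),
      Equiv.swap_apply_left]
  · unfold disjU
    rw [conj_apply, Equiv.swap_apply_right, e1,
      Equiv.swap_apply_of_ne_of_ne (show a ≠ σ a by omega) (show a ≠ c by omega)]
  · unfold disjU
    rw [conj_apply, Equiv.swap_apply_left,
      Equiv.swap_apply_of_ne_of_ne (show σ c ≠ σ a by omega) (show σ c ≠ c by omega)]
  · unfold disjU
    rw [conj_apply,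
      Equiv.swap_apply_of_ne_of_ne (show σ c ≠ σ a by omega) (show σ c ≠ c by omega), e2,
      Equiv.swap_apply_right]
  · intro w hw
    unfold sp at hw; push_neg at hw
    obtain ⟨w1, w2, w3, w4⟩ := hw
    have s3 : σ w ≠ σ a := fun h => w1 (σ.injective h)
    have s4 : σ w ≠ c := fun h => w4 (by rw [← h, hinv w])
    unfold disjU
    rw [conj_apply, Equiv.swap_apply_of_ne_of_ne w3 w2, Equiv.swap_apply_of_ne_of_ne s3 s4]

lemma master_nest (σ : WDperm n) (hinv : ∀ x, σ (σ x) = x) (a c : Fin (2 * n))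
    (hc : IsCrossing σ a c) (p q : Fin (2 * n)) (H : IsCrossing (nestU σ a c) p q) :
    MasterOut σ a c c p q := by
  obtain ⟨va, vc, ve, vf, vw⟩ := nest_apply σ hinv a c hc
  obtain ⟨h1, h2, h3⟩ := hc
  obtain ⟨H1, H2, H3⟩ := H
  by_cases hp : sp σ a c p
  · unfold sp at hp
    rcases hp with h | h | h | h
    · -- p = a
      rw [h] at H1 H2 H3
      rw [va] at H2 H3
      have hq : ¬ sp σ a c q := by
        intro hsp; unfold sp at hsp
        rcases hsp with h' | h' | h' | h'
        · omega
        · rw [h'] at H3; rw [vc] at H3; omega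
        · rw [h'] at H3; rw [ve] at H3; omega
        · omega
      rw [vw q hq] at H3
      refine Or.inr (Or.inl ⟨q, hq, Or.inl ⟨h, rfl⟩, ?_⟩)
      have hq' := hq; unfold sp at hq'; push_neg at hq'
      have i1 : σ q ≠ σ a := fun hh => hq'.1 (σ.injective hh)
      have i2 : σ q ≠ σ c := fun hh => hq'.2.1 (σ.injective hh)
      by_cases hcr : (a < q ∧ q < σ a ∧ σ a < σ q) ∨ (q < a ∧ a < σ q ∧ σ q < σ a)
      · have hx : a < q ∧ q < σ a ∧ σ a < σ q := by omega
        unfold u1; rw [if_pos hcr, min_eq_left hx.1.le, max_eq_right hx.1.le]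
        exact hx
      · have hcq : c < q := by omega
        unfold u1; rw [if_neg hcr, min_eq_left hcq.le, max_eq_right hcq.le]
        exact ⟨hcq, H2, H3⟩
    · -- p = c
      rw [h] at H1 H2 H3
      rw [vc] at H2 H3
      have hq : ¬ sp σ a c q := by
        intro hsp; unfold sp at hsp
        rcases hsp with h' | h' | h' | h'
        · omega
        · omega
        · omega
        · rw [h'] at H3; rw [vf] at H3; omega
      rw [vw q hq] at H3
      refine Or.inr (Or.inr ⟨q, hq, Or.inl ⟨h, rfl⟩, ?_⟩)
      have hq' := hq; unfold sp at hq'; push_neg at hq'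
      have i1 : σ q ≠ σ a := fun hh => hq'.1 (σ.injective hh)
      have i2 : σ q ≠ σ c := fun hh => hq'.2.1 (σ.injective hh)
      by_cases hcr : (c < q ∧ q < σ c ∧ σ c < σ q) ∨ (q < c ∧ c < σ q ∧ σ q < σ c)
      · have hx : c < q ∧ q < σ c ∧ σ c < σ q := by omega
        unfold u2; rw [if_pos hcr, min_eq_left hx.1.le, max_eq_right hx.1.le]
        exact hx
      · have haq : a < q := by omega
        unfold u2; rw [if_neg hcr, min_eq_left haq.le, max_eq_right haq.le]
        exact ⟨haq, H2, H3⟩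
    · -- p = σ a
      rw [h] at H1 H2
      rw [ve] at H2
      exfalso; omega
    · -- p = σ c
      rw [h] at H1 H2
      rw [vf] at H2
      exfalso; omega
  · rw [vw p hp] at H2 H3
    by_cases hq : sp σ a c q
    · unfold sp at hq
      rcases hq with h | h | h | h
      · -- q = a
        rw [h] at H1 H2 H3
        rw [va] at H3
        refine Or.inr (Or.inl ⟨p, hp, Or.inr ⟨rfl, h⟩, ?_⟩)
        have hp' := hp; unfold sp at hp'; push_neg at hp'
        have i1 : σ p ≠ σ a := fun hh => hp'.1 (σ.injective hh)
        have i2 : σ p ≠ σ c := fun hh => hp'.2.1 (σ.injective hh)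
        by_cases hcr : (a < p ∧ p < σ a ∧ σ a < σ p) ∨ (p < a ∧ a < σ p ∧ σ p < σ a)
        · have hx : p < a ∧ a < σ p ∧ σ p < σ a := by omega
          unfold u1; rw [if_pos hcr, min_eq_right hx.1.le, max_eq_left hx.1.le]
          exact hx
        · have hpc : p < c := by omega
          unfold u1; rw [if_neg hcr, min_eq_right hpc.le, max_eq_left hpc.le]
          exact ⟨hpc, by omega, H3⟩
      · -- q = c
        rw [h] at H1 H2 H3
        rw [vc] at H3
        refine Or.inr (Or.inr ⟨p, hp, Or.inr ⟨rfl, h⟩, ?_⟩)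
        have hcr : (c < p ∧ p < σ c ∧ σ c < σ p) ∨ (p < c ∧ c < σ p ∧ σ p < σ c) :=
          Or.inr ⟨H1, H2, by omega⟩
        unfold u2; rw [if_pos hcr, min_eq_right H1.le, max_eq_left H1.le]
        exact ⟨H1, H2, by omega⟩
      · -- q = σ a
        rw [h] at H2 H3
        rw [ve] at H3
        exfalso; omega
      · -- q = σ c
        rw [h] at H2 H3
        rw [vf] at H3
        exfalso; omega
    · rw [vw q hq] at H3
      exact Or.inl ⟨hp, hq, H1, H2, H3⟩

lemma master_disj (σ : WDperm n) (hinv : ∀ x, σ (σ x) = x) (a c : Fin (2 * n))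
    (hc : IsCrossing σ a c) (p q : Fin (2 * n)) (H : IsCrossing (disjU σ a c) p q) :
    MasterOut σ a c (σ a) p q := by
  obtain ⟨va, vc, ve, vf, vw⟩ := disj_apply σ hinv a c hc
  obtain ⟨h1, h2, h3⟩ := hc
  obtain ⟨H1, H2, H3⟩ := H
  by_cases hp : sp σ a c p
  · unfold sp at hp
    rcases hp with h | h | h | h
    · -- p = a
      rw [h] at H1 H2 H3
      rw [va] at H2 H3
      have hq : ¬ sp σ a c q := by
        intro hsp; unfold sp at hsp
        rcases hsp with h' | h' | h' | h'
        · omega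
        · omega
        · omega
        · omega
      rw [vw q hq] at H3
      refine Or.inr (Or.inl ⟨q, hq, Or.inl ⟨h, rfl⟩, ?_⟩)
      have hq' := hq; unfold sp at hq'; push_neg at hq'
      have i1 : σ q ≠ σ a := fun hh => hq'.1 (σ.injective hh)
      have i2 : σ q ≠ σ c := fun hh => hq'.2.1 (σ.injective hh)
      by_cases hcr : (a < q ∧ q < σ a ∧ σ a < σ q) ∨ (q < a ∧ a < σ q ∧ σ q < σ a)
      · have hx : a < q ∧ q < σ a ∧ σ a < σ q := by omega
        unfold u1; rw [if_pos hcr, min_eq_left hx.1.le, max_eq_right hx.1.le]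
        exact hx
      · have hqc : q < c := H2
        unfold u1; rw [if_neg hcr, min_eq_right hqc.le, max_eq_left hqc.le]
        exact ⟨hqc, H3, by omega⟩
    · -- p = c
      rw [h] at H1 H2
      rw [vc] at H2
      exfalso; omega
    · -- p = σ a
      rw [h] at H1 H2 H3
      rw [ve] at H2 H3
      have hq : ¬ sp σ a c q := by
        intro hsp; unfold sp at hsp
        rcases hsp with h' | h' | h' | h'
        · omega
        · omega
        · omega
        · rw [h'] at H3; rw [vf] at H3; omega
      rw [vw q hq] at H3
      refine Or.inr (Or.inr ⟨q, hq, Or.inl ⟨h, rfl⟩, ?_⟩)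
      have hcr : (c < q ∧ q < σ c ∧ σ c < σ q) ∨ (q < c ∧ c < σ q ∧ σ q < σ c) :=
        Or.inl ⟨by omega, H2, H3⟩
      unfold u2; rw [if_pos hcr, min_eq_left (show c ≤ q by omega),
        max_eq_right (show c ≤ q by omega)]
      exact ⟨by omega, H2, H3⟩
    · -- p = σ c
      rw [h] at H1 H2
      rw [vf] at H2
      exfalso; omega
  · rw [vw p hp] at H2 H3
    by_cases hq : sp σ a c q
    · unfold sp at hq
      rcases hq with h | h | h | h
      · -- q = a
        rw [h] at H1 H2 H3
        rw [va] at H3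
        refine Or.inr (Or.inl ⟨p, hp, Or.inr ⟨rfl, h⟩, ?_⟩)
        have hcr : (a < p ∧ p < σ a ∧ σ a < σ p) ∨ (p < a ∧ a < σ p ∧ σ p < σ a) :=
          Or.inr ⟨H1, H2, by omega⟩
        unfold u1; rw [if_pos hcr, min_eq_right H1.le, max_eq_left H1.le]
        exact ⟨H1, H2, by omega⟩
      · -- q = c
        rw [h] at H1 H2 H3
        rw [vc] at H3
        exfalso; omega
      · -- q = σ a
        rw [h] at H1 H2 H3
        rw [ve] at H3
        refine Or.inr (Or.inr ⟨p, hp, Or.inr ⟨rfl, h⟩, ?_⟩)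
        have hp' := hp; unfold sp at hp'; push_neg at hp'
        by_cases hpc : p < c
        · have hcr : (c < p ∧ p < σ c ∧ σ c < σ p) ∨ (p < c ∧ c < σ p ∧ σ p < σ c) :=
            Or.inr ⟨hpc, by omega, H3⟩
          unfold u2; rw [if_pos hcr, min_eq_right hpc.le, max_eq_left hpc.le]
          exact ⟨hpc, by omega, H3⟩
        · have hcr : ¬ ((c < p ∧ p < σ c ∧ σ c < σ p) ∨ (p < c ∧ c < σ p ∧ σ p < σ c)) := by
            omega
          unfold u2; rw [if_neg hcr, min_eq_left (show a ≤ p by omega),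
            max_eq_right (show a ≤ p by omega)]
          exact ⟨by omega, H1, H2⟩
      · -- q = σ c
        rw [h] at H1 H2 H3
        rw [vf] at H3
        exfalso; omega
    · rw [vw q hq] at H3
      exact Or.inl ⟨hp, hq, H1, H2, H3⟩

lemma double_nest (σ : WDperm n) (hinv : ∀ x, σ (σ x) = x) (a c : Fin (2 * n))
    (hc : IsCrossing σ a c) (w : Fin (2 * n)) (hw : ¬ sp σ a c w)
    (hx1 : IsCrossing (nestU σ a c) a w ∨ IsCrossing (nestU σ a c) w a)
    (hx2 : IsCrossing (nestU σ a c) c w ∨ IsCrossing (nestU σ a c) w c) :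
    u1 σ a c w = a ∧ u2 σ a c w = c := by
  obtain ⟨va, vc, ve, vf, vw⟩ := nest_apply σ hinv a c hc
  have hvw := vw w hw
  obtain ⟨h1, h2, h3⟩ := hc
  unfold IsCrossing at hx1 hx2
  rw [va, hvw] at hx1
  rw [vc, hvw] at hx2
  unfold sp at hw; push_neg at hw
  have i1 : σ w ≠ σ a := fun h => hw.1 (σ.injective h)
  have i2 : σ w ≠ σ c := fun h => hw.2.1 (σ.injective h)
  have c1 : (a < w ∧ w < σ a ∧ σ a < σ w) ∨ (w < a ∧ a < σ w ∧ σ w < σ a) := by omega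
  have c2 : (c < w ∧ w < σ c ∧ σ c < σ w) ∨ (w < c ∧ c < σ w ∧ σ w < σ c) := by omega
  exact ⟨by unfold u1; rw [if_pos c1], by unfold u2; rw [if_pos c2]⟩

lemma double_disj (σ : WDperm n) (hinv : ∀ x, σ (σ x) = x) (a c : Fin (2 * n))
    (hc : IsCrossing σ a c) (w : Fin (2 * n)) (hw : ¬ sp σ a c w)
    (hx1 : IsCrossing (disjU σ a c) a w ∨ IsCrossing (disjU σ a c) w a)
    (hx2 : IsCrossing (disjU σ a c) (σ a) w ∨ IsCrossing (disjU σ a c) w (σ a)) :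
    u1 σ a c w = a ∧ u2 σ a c w = c := by
  obtain ⟨va, vc, ve, vf, vw⟩ := disj_apply σ hinv a c hc
  have hvw := vw w hw
  obtain ⟨h1, h2, h3⟩ := hc
  unfold IsCrossing at hx1 hx2
  rw [va, hvw] at hx1
  rw [ve, hvw] at hx2
  unfold sp at hw; push_neg at hw
  have i1 : σ w ≠ σ a := fun h => hw.1 (σ.injective h)
  have i2 : σ w ≠ σ c := fun h => hw.2.1 (σ.injective h)
  have c1 : (a < w ∧ w < σ a ∧ σ a < σ w) ∨ (w < a ∧ a < σ w ∧ σ w < σ a) := by omega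
  have c2 : (c < w ∧ w < σ c ∧ σ c < σ w) ∨ (w < c ∧ c < σ w ∧ σ w < σ c) := by omega
  exact ⟨by unfold u1; rw [if_pos c1], by unfold u2; rw [if_pos c2]⟩

lemma key (σ τ : WDperm n) (a c c2 : Fin (2 * n)) (hc : IsCrossing σ a c)
    (hsp2 : sp σ a c c2) (hc2a : c2 ≠ a)
    (master : ∀ p q, IsCrossing τ p q → MasterOut σ a c c2 p q)
    (double : ∀ w, ¬ sp σ a c w → (IsCrossing τ a w ∨ IsCrossing τ w a) →
        (IsCrossing τ c2 w ∨ IsCrossing τ w c2) → u1 σ a c w = a ∧ u2 σ a c w = c) :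
    ncross τ < ncross σ := by
  classical
  obtain ⟨k1, k2, k3⟩ := hc
  have spa : sp σ a c a := Or.inl rfl
  have spc : sp σ a c c := Or.inr (Or.inl rfl)
  have hu1 : ∀ w, sp σ a c (u1 σ a c w) := fun w => by
    rcases u1_mem σ a c w with h | h <;> rw [h]
    exacts [spa, spc]
  have hu2 : ∀ w, sp σ a c (u2 σ a c w) := fun w => by
    rcases u2_mem σ a c w with h | h <;> rw [h]
    exacts [spa, spc]
  unfold ncross
  have hmem : (a, c) ∈ Finset.univ.filter
      (fun p : Fin (2 * n) × Fin (2 * n) => IsCrossing σ p.1 p.2) :=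
    Finset.mem_filter.mpr ⟨Finset.mem_univ _, ⟨k1, k2, k3⟩⟩
  refine lt_of_le_of_lt (Finset.card_le_card_of_injOn (fmap σ a c) ?_ ?_)
    (Finset.card_erase_lt_of_mem hmem)
  · rintro ⟨p, q⟩ hpq
    rw [Finset.mem_coe, Finset.mem_filter] at hpq
    have M := master p q hpq.2
    rw [Finset.mem_coe, Finset.mem_erase, Finset.mem_filter]
    rcases M with ⟨hp, hq, hcr⟩ | ⟨w, hw, hpq', hcr⟩ | ⟨w, hw, hpq', hcr⟩
    · rw [fmapC σ a c hp hq]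
      refine ⟨?_, Finset.mem_univ _, hcr⟩
      intro h; injection h with e1 e2; exact hp (by rw [e1]; exact spa)
    · rw [fmapA σ a c hw hpq']
      refine ⟨?_, Finset.mem_univ _, hcr⟩
      intro h
      rcases le_total (u1 σ a c w) w with hle | hle
      · rw [min_eq_left hle, max_eq_right hle] at h
        injection h with e1 e2; exact hw (by rw [e2]; exact spc)
      · rw [min_eq_right hle, max_eq_left hle] at h
        injection h with e1 e2; exact hw (by rw [e1]; exact spa)
    · rw [fmapB σ a c c2 hsp2 hc2a hw hpq']
      refine ⟨?_, Finset.mem_univ _, hcr⟩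
      intro h
      rcases le_total (u2 σ a c w) w with hle | hle
      · rw [min_eq_left hle, max_eq_right hle] at h
        injection h with e1 e2; exact hw (by rw [e2]; exact spc)
      · rw [min_eq_right hle, max_eq_left hle] at h
        injection h with e1 e2; exact hw (by rw [e1]; exact spa)
  · rintro ⟨p, q⟩ h1 ⟨p', q'⟩ h2 heq
    simp only [Finset.coe_filter, Set.mem_setOf_eq, Finset.mem_univ, true_and] at h1 h2
    have M1 := master p q h1
    have M2 := master p' q' h2
    rcases M1 with ⟨hp, hq, -⟩ | ⟨w, hw, hpq', -⟩ | ⟨w, hw, hpq', -⟩ <;>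
      rcases M2 with ⟨hp2, hq2, -⟩ | ⟨w2, hw2, hpq2', -⟩ | ⟨w2, hw2, hpq2', -⟩
    · rw [fmapC σ a c hp hq, fmapC σ a c hp2 hq2] at heq
      exact heq
    · rw [fmapC σ a c hp hq, fmapA σ a c hw2 hpq2'] at heq
      exfalso
      rcases le_total (u1 σ a c w2) w2 with hle | hle
      · rw [min_eq_left hle, max_eq_right hle] at heq
        injection heq with e1 e2; exact hp (by rw [e1]; exact hu1 w2)
      · rw [min_eq_right hle, max_eq_left hle] at heq
        injection heq with e1 e2; exact hq (by rw [e2]; exact hu1 w2)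
    · rw [fmapC σ a c hp hq, fmapB σ a c c2 hsp2 hc2a hw2 hpq2'] at heq
      exfalso
      rcases le_total (u2 σ a c w2) w2 with hle | hle
      · rw [min_eq_left hle, max_eq_right hle] at heq
        injection heq with e1 e2; exact hp (by rw [e1]; exact hu2 w2)
      · rw [min_eq_right hle, max_eq_left hle] at heq
        injection heq with e1 e2; exact hq (by rw [e2]; exact hu2 w2)
    · rw [fmapC σ a c hp2 hq2, fmapA σ a c hw hpq'] at heq
      exfalso
      rcases le_total (u1 σ a c w) w with hle | hle
      · rw [min_eq_left hle, max_eq_right hle] at heq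
        injection heq with e1 e2; exact hp2 (by rw [← e1]; exact hu1 w)
      · rw [min_eq_right hle, max_eq_left hle] at heq
        injection heq with e1 e2; exact hq2 (by rw [← e2]; exact hu1 w)
    · -- A, A
      rw [fmapA σ a c hw hpq', fmapA σ a c hw2 hpq2'] at heq
      rcases pair_eq_pair heq with ⟨e1, e2⟩ | ⟨e1, e2⟩
      · subst e2
        rcases hpq' with ⟨hp1, hq1⟩ | ⟨hp1, hq1⟩ <;> rcases hpq2' with ⟨hp2, hq2⟩ | ⟨hp2, hq2⟩ <;>
          subst hp1 <;> subst hq1 <;> subst hp2 <;> subst hq2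
        · rfl
        · exfalso; have l1 := h1.1; have l2 := h2.1; omega
        · exfalso; have l1 := h1.1; have l2 := h2.1; omega
        · rfl
      · exfalso; exact hw2 (by rw [← e1]; exact hu1 w)
    · -- A, B
      rw [fmapA σ a c hw hpq', fmapB σ a c c2 hsp2 hc2a hw2 hpq2'] at heq
      rcases pair_eq_pair heq with ⟨e1, e2⟩ | ⟨e1, e2⟩
      · exfalso
        subst e2
        have cr1 : IsCrossing τ a w ∨ IsCrossing τ w a := by
          rcases hpq' with ⟨hp1, hq1⟩ | ⟨hp1, hq1⟩
          · rw [hp1, hq1] at h1; exact Or.inl h1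
          · rw [hp1, hq1] at h1; exact Or.inr h1
        have cr2 : IsCrossing τ c2 w ∨ IsCrossing τ w c2 := by
          rcases hpq2' with ⟨hp2, hq2⟩ | ⟨hp2, hq2⟩
          · rw [hp2, hq2] at h2; exact Or.inl h2
          · rw [hp2, hq2] at h2; exact Or.inr h2
        obtain ⟨d1, d2⟩ := double w hw cr1 cr2
        rw [d1, d2] at e1
        omega
      · exfalso; exact hw2 (by rw [← e1]; exact hu1 w)
    · rw [fmapC σ a c hp2 hq2, fmapB σ a c c2 hsp2 hc2a hw hpq'] at heq
      exfalso
      rcases le_total (u2 σ a c w) w with hle | hle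
      · rw [min_eq_left hle, max_eq_right hle] at heq
        injection heq with e1 e2; exact hp2 (by rw [← e1]; exact hu2 w)
      · rw [min_eq_right hle, max_eq_left hle] at heq
        injection heq with e1 e2; exact hq2 (by rw [← e2]; exact hu2 w)
    · -- B, A
      rw [fmapB σ a c c2 hsp2 hc2a hw hpq', fmapA σ a c hw2 hpq2'] at heq
      rcases pair_eq_pair heq with ⟨e1, e2⟩ | ⟨e1, e2⟩
      · exfalso
        subst e2
        have cr1 : IsCrossing τ a w ∨ IsCrossing τ w a := by
          rcases hpq2' with ⟨hp2, hq2⟩ | ⟨hp2, hq2⟩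
          · rw [hp2, hq2] at h2; exact Or.inl h2
          · rw [hp2, hq2] at h2; exact Or.inr h2
        have cr2 : IsCrossing τ c2 w ∨ IsCrossing τ w c2 := by
          rcases hpq' with ⟨hp1, hq1⟩ | ⟨hp1, hq1⟩
          · rw [hp1, hq1] at h1; exact Or.inl h1
          · rw [hp1, hq1] at h1; exact Or.inr h1
        obtain ⟨d1, d2⟩ := double w hw cr1 cr2
        rw [d1, d2] at e1
        omega
      · exfalso; exact hw2 (by rw [← e1]; exact hu2 w)
    · -- B, B
      rw [fmapB σ a c c2 hsp2 hc2a hw hpq', fmapB σ a c c2 hsp2 hc2a hw2 hpq2'] at heq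
      rcases pair_eq_pair heq with ⟨e1, e2⟩ | ⟨e1, e2⟩
      · subst e2
        rcases hpq' with ⟨hp1, hq1⟩ | ⟨hp1, hq1⟩ <;> rcases hpq2' with ⟨hp2, hq2⟩ | ⟨hp2, hq2⟩ <;>
          subst hp1 <;> subst hq1 <;> subst hp2 <;> subst hq2
        · rfl
        · exfalso; have l1 := h1.1; have l2 := h2.1; omega
        · exfalso; have l1 := h1.1; have l2 := h2.1; omega
        · rfl
      · exfalso; exact hw2 (by rw [← e1]; exact hu2 w)

lemma mono (σ : WDperm n) (hinv : ∀ x, σ (σ x) = x) (a c : Fin (2 * n))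
    (hc : IsCrossing σ a c) (b : Bool) : ncross (uncrossAt σ a c b) < ncross σ := by
  obtain ⟨k1, k2, k3⟩ := hc
  cases b
  · show ncross (disjU σ a c) < ncross σ
    exact key σ (disjU σ a c) a c (σ a) ⟨k1, k2, k3⟩ (Or.inr (Or.inr (Or.inl rfl)))
      (by omega) (master_disj σ hinv a c ⟨k1, k2, k3⟩) (double_disj σ hinv a c ⟨k1, k2, k3⟩)
  · show ncross (nestU σ a c) < ncross σ
    exact key σ (nestU σ a c) a c c ⟨k1, k2, k3⟩ (Or.inr (Or.inl rfl))
      (by omega) (master_nest σ hinv a c ⟨k1, k2, k3⟩) (double_nest σ hinv a c ⟨k1, k2, k3⟩)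

lemma swap_comm_of_ne {u v u' v' : Fin (2 * n)} (h1 : u ≠ u') (h2 : u ≠ v')
    (h3 : v ≠ u') (h4 : v ≠ v') :
    Equiv.swap u v * Equiv.swap u' v' = Equiv.swap u' v' * Equiv.swap u v := by
  ext t
  simp only [Equiv.Perm.mul_apply, Equiv.swap_apply_def]
  split_ifs <;> simp_all

lemma uncross_conj (σ : WDperm n) (a c : Fin (2 * n)) (b : Bool) :
    uncrossAt σ a c b =
      Equiv.swap (σ a) (if b then σ c else c) * σ * Equiv.swap (σ a) (if b then σ c else c) := by
  cases b <;> rfl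

lemma conj_wd (σ : WDperm n) (hinv : ∀ x, σ (σ x) = x) (hfp : ∀ x, σ x ≠ x)
    (u v : Fin (2 * n)) : IsWD (Equiv.swap u v * σ * Equiv.swap u v) := by
  constructor
  · intro t
    simp only [conj_apply, Equiv.swap_apply_self, hinv]
  · intro t h
    rw [conj_apply] at h
    have h2 := congrArg (Equiv.swap u v) h
    rw [Equiv.swap_apply_self] at h2
    exact hfp _ h2

end CDUaux

/-- If the two uncrossing steps `x ⋖ y` and `y ⋖ z` involve four disjoint pairs (eight distinct
positions, with the pairs uncrossed in the second step already pairs of `x`), then the two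
uncrossings may be performed in the other order: the diagram `y'` obtained from `x` by the
second uncrossing satisfies `x ⋖ y' ⋖ z`, and `y' ≠ y`. -/
theorem commute_disjoint_uncrossings (n : ℕ) (hn : 2 ≤ n)
    (x y z : {σ : WDperm n // IsWD σ})
    (a c a' c' : Fin (2 * n)) (b₁ b₂ : Bool)
    (hc1 : IsCrossing x.1 a c) (hy : y.1 = uncrossAt x.1 a c b₁)
    (hcov1 : ncross y.1 + 1 = ncross x.1)
    (hc2 : IsCrossing y.1 a' c') (hz : z.1 = uncrossAt y.1 a' c' b₂)
    (hcov2 : ncross z.1 + 1 = ncross y.1)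
    (hQx : x.1 a' = y.1 a' ∧ x.1 c' = y.1 c')
    (hdist : ([a, c, x.1 a, x.1 c, a', c', y.1 a', y.1 c'] :
        List (Fin (2 * n))).Pairwise (· ≠ ·)) :
    ∃ h : IsWD (uncrossAt x.1 a' c' b₂),
      Cov (some x) (some ⟨uncrossAt x.1 a' c' b₂, h⟩) ∧
      Cov (some ⟨uncrossAt x.1 a' c' b₂, h⟩) (some z) ∧
      uncrossAt x.1 a' c' b₂ ≠ y.1 := by
  
  classical
  obtain ⟨hxinv, hxfp⟩ := x.2
  obtain ⟨hq1, hq2⟩ := hQx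
  rw [← hq1, ← hq2] at hdist
  simp only [List.pairwise_cons] at hdist
  obtain ⟨d1, d2, d3, d4, d5, d6, d7, -⟩ := hdist
  set w2 : Fin (2 * n) := if b₂ then x.1 c' else c' with hw2
  set w1 : Fin (2 * n) := if b₁ then x.1 c else c with hw1
  have hw2cases : w2 = x.1 c' ∨ w2 = c' := by
    rw [hw2]; cases b₂
    · exact Or.inr rfl
    · exact Or.inl rfl
  have hw1cases : w1 = x.1 c ∨ w1 = c := by
    rw [hw1]; cases b₁
    · exact Or.inr rfl
    · exact Or.inl rfl
  have hy'conj : uncrossAt x.1 a' c' b₂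
      = Equiv.swap (x.1 a') w2 * x.1 * Equiv.swap (x.1 a') w2 := by
    rw [CDUaux.uncross_conj x.1 a' c' b₂, ← hw2]
  have hyconj : y.1 = Equiv.swap (x.1 a) w1 * x.1 * Equiv.swap (x.1 a) w1 := by
    rw [hy, CDUaux.uncross_conj x.1 a c b₁, ← hw1]
  have na1 : a ≠ x.1 a' := d1 _ (by simp)
  have na2 : a ≠ w2 := by
    rcases hw2cases with h | h <;> rw [h]
    · exact d1 _ (by simp)
    · exact d1 _ (by simp)
  have nc1 : c ≠ x.1 a' := d2 _ (by simp)
  have nc2 : c ≠ w2 := by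
    rcases hw2cases with h | h <;> rw [h]
    · exact d2 _ (by simp)
    · exact d2 _ (by simp)
  have nE1 : x.1 a ≠ x.1 a' := d3 _ (by simp)
  have nE2 : x.1 a ≠ w2 := by
    rcases hw2cases with h | h <;> rw [h]
    · exact d3 _ (by simp)
    · exact d3 _ (by simp)
  have nF1 : x.1 c ≠ x.1 a' := d4 _ (by simp)
  have nF2 : x.1 c ≠ w2 := by
    rcases hw2cases with h | h <;> rw [h]
    · exact d4 _ (by simp)
    · exact d4 _ (by simp)
  have nW1a' : w1 ≠ x.1 a' := by
    rcases hw1cases with h | h <;> rw [h]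
    · exact d4 _ (by simp)
    · exact d2 _ (by simp)
  have nW1w2 : w1 ≠ w2 := by
    rcases hw1cases with h | h <;> rcases hw2cases with h' | h' <;> rw [h, h'] <;>
      first
        | exact d4 _ (by simp)
        | exact d2 _ (by simp)
  have hcomm := CDUaux.swap_comm_of_ne nE1 nE2 nW1a' nW1w2
  have hcommap : ∀ v, Equiv.swap (x.1 a) w1 (Equiv.swap (x.1 a') w2 v)
      = Equiv.swap (x.1 a') w2 (Equiv.swap (x.1 a) w1 v) := by
    intro v
    simpa [Equiv.Perm.mul_apply] using Equiv.ext_iff.mp hcomm v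
  have hy'a : uncrossAt x.1 a' c' b₂ a = x.1 a := by
    rw [hy'conj, CDUaux.conj_apply, Equiv.swap_apply_of_ne_of_ne na1 na2,
      Equiv.swap_apply_of_ne_of_ne nE1 nE2]
  have hy'c : uncrossAt x.1 a' c' b₂ c = x.1 c := by
    rw [hy'conj, CDUaux.conj_apply, Equiv.swap_apply_of_ne_of_ne nc1 nc2,
      Equiv.swap_apply_of_ne_of_ne nF1 nF2]
  have hcx2 : IsCrossing x.1 a' c' := by
    refine ⟨hc2.1, ?_, ?_⟩
    · rw [hq1]; exact hc2.2.1
    · rw [hq1, hq2]; exact hc2.2.2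
  have hwd : IsWD (uncrossAt x.1 a' c' b₂) := by
    rw [hy'conj]; exact CDUaux.conj_wd x.1 hxinv hxfp _ _
  have hcy' : IsCrossing (uncrossAt x.1 a' c' b₂) a c := by
    refine ⟨hc1.1, ?_, ?_⟩
    · rw [hy'a]; exact hc1.2.1
    · rw [hy'a, hy'c]; exact hc1.2.2
  have hz' : z.1 = uncrossAt (uncrossAt x.1 a' c' b₂) a c b₁ := by
    rw [CDUaux.uncross_conj (uncrossAt x.1 a' c' b₂) a c b₁, hy'a, hy'c, ← hw1]
    rw [hz, CDUaux.uncross_conj y.1 a' c' b₂, ← hq1, ← hq2, ← hw2]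
    rw [hyconj, hy'conj]
    ext t
    simp only [Equiv.Perm.mul_apply]
    rw [hcommap t, hcommap (x.1 (Equiv.swap (x.1 a') w2 (Equiv.swap (x.1 a) w1 t)))]
  have hm1 : ncross (uncrossAt x.1 a' c' b₂) < ncross x.1 :=
    CDUaux.mono x.1 hxinv a' c' hcx2 b₂
  have hm2 : ncross z.1 < ncross (uncrossAt x.1 a' c' b₂) := by
    rw [hz']; exact CDUaux.mono _ hwd.1 a c hcy' b₁
  refine ⟨hwd, ?_, ?_, ?_⟩
  · show UncCov x.1 (uncrossAt x.1 a' c' b₂)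
    refine ⟨?_, by omega⟩
    cases b₂
    · exact Or.inr ⟨a', c', hcx2, rfl⟩
    · exact Or.inl ⟨a', c', hcx2, rfl⟩
  · show UncCov (uncrossAt x.1 a' c' b₂) z.1
    refine ⟨?_, by omega⟩
    cases b₁
    · exact Or.inr ⟨a, c, hcy', by rw [hz']; rfl⟩
    · exact Or.inl ⟨a, c, hcy', by rw [hz']; rfl⟩
  · intro hEq
    have hya : y.1 a = w1 := by
      have na3 : a ≠ x.1 a := d1 _ (by simp)
      have na4 : a ≠ w1 := by
        rcases hw1cases with h | h <;> rw [h]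
        · exact d1 _ (by simp)
        · exact d1 _ (by simp)
      rw [hyconj, CDUaux.conj_apply, Equiv.swap_apply_of_ne_of_ne na3 na4,
        Equiv.swap_apply_left]
    have hxw : x.1 a = w1 := by rw [← hy'a, hEq, hya]
    rcases hw1cases with h | h
    · rw [h] at hxw
      exact (d1 _ (by simp) : a ≠ c) (x.1.injective hxw)
    · rw [h] at hxw
      exact (d2 _ (by simp) : c ≠ x.1 a) hxw.symm
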